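/- Let D be a finite domain and let A : D × D → Bool be a (deterministic) function. Let x, x₁, ..., x_M be i.i.d. random variables drawn from a distribution Q on D. Define the event E(x; x₁,...,x_M) that for every i ∈ [M], A(x, xᵢ) = 0 and A(xᵢ, x) = 1. Then the probability of E(x; x₁,...,x_M) is at most 1/(M+1). -/

import Mathlib

open MeasureTheory

/-- For i.i.d. draws x, x₁, ..., x_M from a distribution Q on a finite domain D,
the event that A(x, xᵢ) = 0 and A(xᵢ, x) = 1 for every i has probability at most 1/(M+1). -/
theorem stmt0 {D : Type*} [Fintype D] [MeasurableSpace D] [MeasurableSingletonClass D]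
    (A : D → D → Bool) (Q : Measure D) [IsProbabilityMeasure Q] (M : ℕ) :
    (Measure.pi (fun _ : Fin (M + 1) => Q))
      {f | ∀ i : Fin M, A (f 0) (f i.succ) = false ∧ A (f i.succ) (f 0) = true}
      ≤ 1 / (M + 1) := by
  classical
  set μ := Measure.pi (fun _ : Fin (M + 1) => Q) with hμ
  set S : Fin (M + 1) → Set (Fin (M + 1) → D) :=
    fun j => {f | ∀ i, i ≠ j → A (f j) (f i) = false ∧ A (f i) (f j) = true} with hS
  have hmeas : ∀ s : Set (Fin (M + 1) → D), MeasurableSet s := fun s => s.toFinite.measurableSet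
  have htarget : {f : Fin (M + 1) → D |
      ∀ i : Fin M, A (f 0) (f i.succ) = false ∧ A (f i.succ) (f 0) = true} = S 0 := by
    ext f
    simp only [hS, Set.mem_setOf_eq]
    constructor
    · intro h i hi
      obtain ⟨k, rfl⟩ := Fin.eq_succ_of_ne_zero hi
      exact h k
    · intro h i
      exact h i.succ (Fin.succ_ne_zero i)
  have hsame : ∀ j, μ (S j) = μ (S 0) := by
    intro j
    set σ : Fin (M + 1) ≃ Fin (M + 1) := Equiv.swap 0 j with hσ
    have hinv : ∀ k, σ (σ k) = k := fun k => Equiv.swap_apply_self 0 j k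
    have hj0 : σ j = 0 := Equiv.swap_apply_right 0 j
    have hp := measurePreserving_piCongrLeft (fun _ : Fin (M + 1) => Q) σ
    have hkey := hp.measure_preimage (hmeas (S j)).nullMeasurableSet
    rw [← hμ] at hkey
    rw [← hkey]
    congr 1
    ext f
    have happ : ∀ k, (MeasurableEquiv.piCongrLeft (fun _ : Fin (M + 1) => D) σ) f k
        = f (σ k) := by
      intro k
      have := Equiv.piCongrLeft_apply_apply (fun _ : Fin (M + 1) => D) σ f (σ k)
      rwa [hinv k] at this
    simp only [Set.mem_preimage, hS, Set.mem_setOf_eq, happ, hj0]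
    constructor
    · intro h i hi
      have h2 := h (σ i) (by
        intro hc
        exact hi (by rw [← hinv i, hc, hj0]))
      rwa [hinv i] at h2
    · intro h i hi
      refine h (σ i) ?_
      intro hc
      exact hi (by rw [← hinv i, hc]; exact Equiv.swap_apply_left 0 j)
  have hdisj : Pairwise (Function.onFun Disjoint S) := by
    intro j k hjk
    rw [Function.onFun, Set.disjoint_left]
    intro f hfj hfk
    have h1 := (hfj k hjk.symm).1
    have h2 := (hfk j hjk).2
    rw [h1] at h2
    exact Bool.false_ne_true h2
  have hsum : ∑ j : Fin (M + 1), μ (S j) ≤ 1 := by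
    rw [← tsum_fintype (L := SummationFilter.unconditional _), ← measure_iUnion hdisj (fun j => hmeas _)]
    exact prob_le_one
  rw [htarget]
  have hsum2 : (M + 1 : ENNReal) * μ (S 0) ≤ 1 := by
    calc (M + 1 : ENNReal) * μ (S 0) = ∑ j : Fin (M + 1), μ (S 0) := by
          simp [Finset.sum_const, mul_comm]
      _ = ∑ j : Fin (M + 1), μ (S j) := by
          exact Finset.sum_congr rfl (fun j _ => (hsame j).symm)
      _ ≤ 1 := hsum
  rw [ENNReal.le_div_iff_mul_le (by simp) (by simp)]
  rwa [mul_comm]
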